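/- For each real s, the 9-dimensional Lie algebra n_s (with the relations of Definition 3.3) is three-step nilpotent of type (3,3,3): dim(n_s/n_s^(2)) = 3, dim(n_s^(2)/n_s^(3)) = 3, dim(n_s^(3)) = 3, and n_s^(4) = 0. -/
import Mathlib


open Real in
/-- Brackets of basis vectors `[xᵢ, xⱼ]` (for `i < j`) of the 9-dimensional
Lie algebra `n_s`, with `x₁,…,x₉` identified with `Pi.single 0 1, …, Pi.single 8 1`. -/
noncomputable def sc9 (s : ℝ) (i j : Fin 9) : Fin 9 → ℝ :=
  if i = 1 ∧ j = 2 then exp (4*s) • (Pi.single 3 1 : Fin 9 → ℝ)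
  else if i = 0 ∧ j = 2 then exp (-3*s) • (Pi.single 4 1 : Fin 9 → ℝ)
  else if i = 0 ∧ j = 1 then exp (-s) • (Pi.single 5 1 : Fin 9 → ℝ)
  else if i = 1 ∧ j = 5 then exp (-4*s) • (Pi.single 6 1 : Fin 9 → ℝ)
  else if i = 2 ∧ j = 3 then exp (4*s) • (Pi.single 6 1 : Fin 9 → ℝ)
  else if i = 0 ∧ j = 5 then exp (4*s) • (Pi.single 7 1 : Fin 9 → ℝ)
  else if i = 1 ∧ j = 3 then (Pi.single 7 1 : Fin 9 → ℝ)
  else if i = 2 ∧ j = 4 then exp (-4*s) • (Pi.single 7 1 : Fin 9 → ℝ)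
  else if i = 2 ∧ j = 5 then exp (-s) • (Pi.single 8 1 : Fin 9 → ℝ)
  else if i = 1 ∧ j = 4 then exp s • (Pi.single 8 1 : Fin 9 → ℝ)
  else 0

/-- Skew-symmetrized structure constants. -/
noncomputable def bb9 (s : ℝ) (i j : Fin 9) : Fin 9 → ℝ := sc9 s i j - sc9 s j i

/-- The skew-symmetric bilinear extension of the bracket relations of `n_s`. -/
noncomputable def bracket9 (s : ℝ) (u v : Fin 9 → ℝ) : Fin 9 → ℝ :=
  ∑ i : Fin 9, ∑ j : Fin 9, (u i * v j) • bb9 s i j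

/-- The lower central series of the 9-dimensional `n_s`: `lcs9 s 0 = n_s⁽¹⁾ = n_s`,
`lcs9 s n = n_s⁽ⁿ⁺¹⁾`. -/
noncomputable def lcs9 (s : ℝ) : ℕ → Submodule ℝ (Fin 9 → ℝ)
  | 0 => ⊤
  | n + 1 => Submodule.span ℝ
      {z : Fin 9 → ℝ | ∃ u : Fin 9 → ℝ, ∃ v ∈ lcs9 s n, z = bracket9 s u v}

noncomputable def genV1 : Fin 6 → (Fin 9 → ℝ) := fun k => Pi.single (⟨k.1 + 3, by omega⟩ : Fin 9) 1
noncomputable def genV2 : Fin 3 → (Fin 9 → ℝ) := fun k => Pi.single (⟨k.1 + 6, by omega⟩ : Fin 9) 1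
noncomputable def V1 : Submodule ℝ (Fin 9 → ℝ) := Submodule.span ℝ (Set.range genV1)
noncomputable def V2 : Submodule ℝ (Fin 9 → ℝ) := Submodule.span ℝ (Set.range genV2)

lemma single_congr {a b : Fin 9} (h : a = b) : (Pi.single a 1 : Fin 9 → ℝ) = Pi.single b 1 := by rw [h]

lemma hV1 (k : Fin 9) (hk : 3 ≤ k.1) : Pi.single k (1:ℝ) ∈ V1 := by
  apply Submodule.subset_span
  refine ⟨⟨k.1 - 3, by omega⟩, ?_⟩
  unfold genV1
  exact single_congr (Fin.ext (by simp only [Fin.val_mk]; omega))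

lemma hV2 (k : Fin 9) (hk : 6 ≤ k.1) : Pi.single k (1:ℝ) ∈ V2 := by
  apply Submodule.subset_span
  refine ⟨⟨k.1 - 6, by omega⟩, ?_⟩
  unfold genV2
  exact single_congr (Fin.ext (by simp only [Fin.val_mk]; omega))

lemma memV1_apply {v : Fin 9 → ℝ} (hv : v ∈ V1) (m : Fin 9) (hm : m.1 < 3) : v m = 0 := by
  induction hv using Submodule.span_induction with
  | mem x hx =>
    obtain ⟨k, rfl⟩ := hx
    exact Pi.single_eq_of_ne (by exact Fin.ne_of_val_ne (by simp [genV1]; omega)) _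
  | zero => rfl
  | add x y _ _ hx hy => simp [hx, hy]
  | smul c x _ hx => simp [hx]

lemma memV2_apply {v : Fin 9 → ℝ} (hv : v ∈ V2) (m : Fin 9) (hm : m.1 < 6) : v m = 0 := by
  induction hv using Submodule.span_induction with
  | mem x hx =>
    obtain ⟨k, rfl⟩ := hx
    exact Pi.single_eq_of_ne (by exact Fin.ne_of_val_ne (by simp [genV2]; omega)) _
  | zero => rfl
  | add x y _ _ hx hy => simp [hx, hy]
  | smul c x _ hx => simp [hx]

lemma bracket_single (s : ℝ) (i j : Fin 9) :
    bracket9 s (Pi.single i 1) (Pi.single j 1) = bb9 s i j := by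
  unfold bracket9
  simp [Pi.single_apply, mul_ite, ite_mul, ite_smul, Finset.sum_ite_eq']

lemma finrank_V1 : Module.finrank ℝ V1 = 6 := by
  have hli : LinearIndependent ℝ genV1 := by
    have h := (Pi.basisFun ℝ (Fin 9)).linearIndependent.comp
      (fun k : Fin 6 => (⟨k.1 + 3, by omega⟩ : Fin 9))
      (fun a b hab => Fin.ext (by have := Fin.val_eq_of_eq hab; simpa using this))
    convert h using 1
    funext k
    simp [genV1, Pi.basisFun_apply]
  rw [V1, finrank_span_eq_card hli]
  simp

lemma bbV1 (s : ℝ) (i j : Fin 9) : bb9 s i j ∈ V1 := by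
  fin_cases i <;> fin_cases j <;>
    simp [bb9, sc9] <;>
    first
      | exact zero_mem _
      | exact Submodule.smul_mem _ _ (hV1 _ (by decide))
      | exact hV1 _ (by decide)
      | exact Submodule.neg_mem _ (Submodule.smul_mem _ _ (hV1 _ (by decide)))
      | exact Submodule.neg_mem _ (hV1 _ (by decide))

lemma bbV2 (s : ℝ) (i j : Fin 9) (hj : 3 ≤ j.1) : bb9 s i j ∈ V2 := by
  fin_cases i <;> fin_cases j <;>
    first
      | exact absurd hj (by decide)
      | (simp [bb9, sc9] <;>
          first
            | exact zero_mem _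
            | exact Submodule.smul_mem _ _ (hV2 _ (by decide))
            | exact hV2 _ (by decide))

lemma bb0 (s : ℝ) (i j : Fin 9) (hj : 6 ≤ j.1) : bb9 s i j = 0 := by
  fin_cases i <;> fin_cases j <;>
    first
      | exact absurd hj (by decide)
      | simp [bb9, sc9]

lemma finrank_V2 : Module.finrank ℝ V2 = 3 := by
  have hli : LinearIndependent ℝ genV2 := by
    have h := (Pi.basisFun ℝ (Fin 9)).linearIndependent.comp
      (fun k : Fin 3 => (⟨k.1 + 6, by omega⟩ : Fin 9))
      (fun a b hab => Fin.ext (by have := Fin.val_eq_of_eq hab; simpa using this))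
    convert h using 1
    funext k
    simp [genV2, Pi.basisFun_apply]
  rw [V2, finrank_span_eq_card hli]
  simp

lemma lcs1_eq (s : ℝ) : lcs9 s 1 = V1 := by
  apply le_antisymm
  · apply Submodule.span_le.2
    rintro z ⟨u, v, -, rfl⟩
    exact Submodule.sum_mem _ fun i _ =>
      Submodule.sum_mem _ fun j _ => Submodule.smul_mem _ _ (bbV1 s i j)
  · apply Submodule.span_le.2
    rintro z ⟨k, rfl⟩
    have hb : ∀ (i j : Fin 9) (c : ℝ), c • bb9 s i j ∈ lcs9 s 1 := fun i j c =>
      Submodule.smul_mem _ _ (Submodule.subset_span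
        ⟨Pi.single i 1, Pi.single j 1, Submodule.mem_top, (bracket_single s i j).symm⟩)
    have key : ∀ (i j : Fin 9) (c : ℝ) (m : Fin 9), c ≠ 0 →
        bb9 s i j = c • (Pi.single m 1 : Fin 9 → ℝ) → Pi.single m (1:ℝ) ∈ lcs9 s 1 := by
      intro i j c m hc h
      have := hb i j c⁻¹
      rwa [h, smul_smul, inv_mul_cancel₀ hc, one_smul] at this
    fin_cases k
    · exact key 1 2 (Real.exp (4*s)) 3 (Real.exp_ne_zero _) (by simp [bb9, sc9])
    · exact key 0 2 (Real.exp (-3*s)) 4 (Real.exp_ne_zero _) (by simp [bb9, sc9])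
    · exact key 0 1 (Real.exp (-s)) 5 (Real.exp_ne_zero _) (by simp [bb9, sc9])
    · exact key 1 5 (Real.exp (-4*s)) 6 (Real.exp_ne_zero _) (by simp [bb9, sc9])
    · exact key 1 3 1 7 one_ne_zero (by simp [bb9, sc9])
    · exact key 1 4 (Real.exp s) 8 (Real.exp_ne_zero _) (by simp [bb9, sc9])

lemma lcs2_eq (s : ℝ) : lcs9 s 2 = V2 := by
  apply le_antisymm
  · apply Submodule.span_le.2
    rintro z ⟨u, v, hv, rfl⟩
    rw [lcs1_eq] at hv
    refine Submodule.sum_mem _ fun i _ => Submodule.sum_mem _ fun j _ => ?_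
    by_cases hj : 3 ≤ j.1
    · exact Submodule.smul_mem _ _ (bbV2 s i j hj)
    · rw [memV1_apply hv j (by omega), mul_zero, zero_smul]
      exact zero_mem _
  · apply Submodule.span_le.2
    rintro z ⟨k, rfl⟩
    have hb : ∀ (i j : Fin 9) (c : ℝ), Pi.single j 1 ∈ lcs9 s 1 → c • bb9 s i j ∈ lcs9 s 2 :=
      fun i j c hj => Submodule.smul_mem _ _ (Submodule.subset_span
        ⟨Pi.single i 1, Pi.single j 1, hj, (bracket_single s i j).symm⟩)
    have key : ∀ (i j : Fin 9) (c : ℝ) (m : Fin 9), c ≠ 0 → Pi.single j 1 ∈ lcs9 s 1 →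
        bb9 s i j = c • (Pi.single m 1 : Fin 9 → ℝ) → Pi.single m (1:ℝ) ∈ lcs9 s 2 := by
      intro i j c m hc hj h
      have := hb i j c⁻¹ hj
      rwa [h, smul_smul, inv_mul_cancel₀ hc, one_smul] at this
    have h5 : Pi.single (5 : Fin 9) (1:ℝ) ∈ lcs9 s 1 := by rw [lcs1_eq]; exact hV1 _ (by decide)
    have h3 : Pi.single (3 : Fin 9) (1:ℝ) ∈ lcs9 s 1 := by rw [lcs1_eq]; exact hV1 _ (by decide)
    fin_cases k
    · exact key 1 5 (Real.exp (-4*s)) 6 (Real.exp_ne_zero _) h5 (by simp [bb9, sc9])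
    · exact key 1 3 1 7 one_ne_zero h3 (by simp [bb9, sc9])
    · exact key 2 5 (Real.exp (-s)) 8 (Real.exp_ne_zero _) h5 (by simp [bb9, sc9])

lemma lcs3_eq (s : ℝ) : lcs9 s 3 = ⊥ := by
  refine le_antisymm (Submodule.span_le.2 ?_) bot_le
  rintro z ⟨u, v, hv, rfl⟩
  rw [lcs2_eq] at hv
  rw [SetLike.mem_coe, Submodule.mem_bot]
  refine Finset.sum_eq_zero fun i _ => Finset.sum_eq_zero fun j _ => ?_
  by_cases hj : 6 ≤ j.1
  · rw [bb0 s i j hj, smul_zero]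
  · rw [memV2_apply hv j (by omega), mul_zero, zero_smul]

lemma V2_le_V1 : V2 ≤ V1 := by
  apply Submodule.span_le.2
  rintro z ⟨k, rfl⟩
  exact hV1 _ (by simp [genV2])

set_option synthInstance.maxHeartbeats 1000000 in
/-- For each real `s`, the 9-dimensional `n_s` is three-step nilpotent of type
`(3,3,3)`: `dim(n_s/n_s⁽²⁾) = 3`, `dim(n_s⁽²⁾/n_s⁽³⁾) = 3`, `dim n_s⁽³⁾ = 3`,
and `n_s⁽⁴⁾ = 0`. -/
theorem stmt8 (s : ℝ) :
    Module.finrank ℝ ((Fin 9 → ℝ) ⧸ lcs9 s 1) = 3 ∧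
    Module.finrank ℝ (↥(lcs9 s 1) ⧸ (lcs9 s 2).comap (lcs9 s 1).subtype) = 3 ∧
    Module.finrank ℝ ↥(lcs9 s 2) = 3 ∧
    lcs9 s 3 = ⊥ := by
  have h1 := lcs1_eq s
  have h2 := lcs2_eq s
  have f1 : Module.finrank ℝ (lcs9 s 1) = 6 := by rw [h1]; exact finrank_V1
  have f2 : Module.finrank ℝ (lcs9 s 2) = 3 := by rw [h2]; exact finrank_V2
  refine ⟨?_, ?_, f2, lcs3_eq s⟩
  · have hq := Submodule.finrank_quotient_add_finrank (lcs9 s 1)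
    have h9 : Module.finrank ℝ (Fin 9 → ℝ) = 9 := by simp
    omega
  · have hle : lcs9 s 2 ≤ lcs9 s 1 := by rw [h1, h2]; exact V2_le_V1
    have fe : Module.finrank ℝ ((lcs9 s 2).comap (lcs9 s 1).subtype) = 3 := by
      rw [(Submodule.comapSubtypeEquivOfLe hle).finrank_eq]; exact f2
    have hq := Submodule.finrank_quotient_add_finrank ((lcs9 s 2).comap (lcs9 s 1).subtype)
    omega
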